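/- arXiv:2105.03893 — 2 statements merged into one kernel-verified Lean document; each statement's English description precedes it below -/
import Mathlib

section
/- Let ω be a random vector in ℝ^d with an arbitrary distribution, and let b be an independent random variable uniformly distributed on (0, 2π). Then for all x, x' ∈ ℝ^d, E[cos(ωᵀ(x − x'))] = E[2 cos(ωᵀ x + b) cos(ωᵀ x' + b)]. -/
open MeasureTheory ProbabilityTheory

lemma rff_aux_zero {Ω : Type*} [MeasurableSpace Ω] (P : Measure Ω) [IsProbabilityMeasure P]
    (b : Ω → ℝ) (hb : Measurable b)
    (hbunif : Measure.map b P =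
      (ENNReal.ofReal (2 * Real.pi)⁻¹) •
        volume.restrict (Set.Ioo 0 (2 * Real.pi)))
    (g : ℝ → ℝ) (hg : Measurable g)
    (hint : (∫ t in (0:ℝ)..(2 * Real.pi), g t) = 0) :
    ∫ a, g (b a) ∂P = 0 := by
  have h1 : ∫ a, g (b a) ∂P = ∫ t, g t ∂(Measure.map b P) :=
    (integral_map hb.aemeasurable hg.aestronglyMeasurable).symm
  rw [h1, hbunif, integral_smul_measure]
  have h2 : ∫ t in Set.Ioo (0:ℝ) (2 * Real.pi), g t = 0 := by
    rw [← integral_Ioc_eq_integral_Ioo, ← intervalIntegral.integral_of_le (by positivity), hint]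
  rw [h2]; simp

set_option maxHeartbeats 1000000

/-- Random Fourier features identity: if `ω` is a random vector in `ℝ^d` with arbitrary
distribution and `b` is an independent random variable uniformly distributed on `(0, 2π)`,
then `E[cos(ωᵀ(x − x'))] = E[2 cos(ωᵀx + b) cos(ωᵀx' + b)]`. -/
theorem rff_expectation_identity
    {Ω : Type*} [MeasurableSpace Ω] (P : Measure Ω) [IsProbabilityMeasure P]
    (d : ℕ) (ω : Ω → (Fin d → ℝ)) (b : Ω → ℝ)
    (hω : Measurable ω) (hb : Measurable b)
    (hindep : IndepFun ω b P)
    (hbunif : Measure.map b P =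
      (ENNReal.ofReal (2 * Real.pi)⁻¹) •
        volume.restrict (Set.Ioo 0 (2 * Real.pi)))
    (x x' : Fin d → ℝ) :
    ∫ a, Real.cos (∑ i, ω a i * (x i - x' i)) ∂P =
      ∫ a, 2 * Real.cos ((∑ i, ω a i * x i) + b a) *
            Real.cos ((∑ i, ω a i * x' i) + b a) ∂P := by
  set u : Ω → ℝ := fun a => ∑ i, ω a i * x i with hu
  set v : Ω → ℝ := fun a => ∑ i, ω a i * x' i with hv
  have hum : Measurable u := by
    apply Finset.measurable_sum
    exact fun i _ => ((measurable_pi_apply i).comp hω).mul_const _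
  have hvm : Measurable v := by
    apply Finset.measurable_sum
    exact fun i _ => ((measurable_pi_apply i).comp hω).mul_const _
  -- pointwise identity
  have hpt : ∀ a, 2 * Real.cos (u a + b a) * Real.cos (v a + b a) =
      Real.cos (∑ i, ω a i * (x i - x' i))
        + (Real.cos (u a + v a) * Real.cos (2 * b a)
          - Real.sin (u a + v a) * Real.sin (2 * b a)) := by
    intro a
    have hsum : (∑ i, ω a i * (x i - x' i)) = u a - v a := by
      simp [hu, hv, mul_sub, Finset.sum_sub_distrib]
    rw [hsum]
    have h1 : 2 * Real.cos (u a + b a) * Real.cos (v a + b a)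
        = Real.cos (u a - v a) + Real.cos (u a + v a + 2 * b a) := by
      rw [Real.cos_add (u a) (b a), Real.cos_add (v a) (b a),
        Real.cos_sub, Real.cos_add (u a + v a),
        Real.cos_add (u a) (v a), Real.sin_add (u a) (v a),
        Real.cos_two_mul, Real.sin_two_mul]
      linear_combination 2 * Real.sin (u a) * Real.sin (v a) * Real.sin_sq_add_cos_sq (b a)
    rw [h1, Real.cos_add (u a + v a)]
  have hbd : ∀ (f : Ω → ℝ), Measurable f → (∀ a, |f a| ≤ 2) → Integrable f P := by
    intro f hf hbound
    exact (integrable_const (2:ℝ)).mono' hf.aestronglyMeasurable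
      (Filter.Eventually.of_forall fun a => by simpa using hbound a)
  have hb2 : ∀ a : ℝ, |Real.cos a| ≤ 2 := fun a => (Real.abs_cos_le_one a).trans one_le_two
  have hs2 : ∀ a : ℝ, |Real.sin a| ≤ 2 := fun a => (Real.abs_sin_le_one a).trans one_le_two
  have hi1 : Integrable (fun a => Real.cos (∑ i, ω a i * (x i - x' i))) P :=
    hbd _ (Real.measurable_cos.comp (by
      apply Finset.measurable_sum
      exact fun i _ => ((measurable_pi_apply i).comp hω).mul_const _)) (fun a => hb2 _)
  have hi2 : Integrable (fun a => Real.cos (u a + v a) * Real.cos (2 * b a)) P :=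
    hbd _ ((Real.measurable_cos.comp (hum.add hvm)).mul
      (Real.measurable_cos.comp (hb.const_mul 2)))
      (fun a => by
        calc |Real.cos (u a + v a) * Real.cos (2 * b a)|
            = |Real.cos (u a + v a)| * |Real.cos (2 * b a)| := abs_mul _ _
          _ ≤ 1 * 2 := mul_le_mul (Real.abs_cos_le_one _) (hb2 _) (abs_nonneg _) zero_le_one
          _ = 2 := one_mul 2)
  have hi3 : Integrable (fun a => Real.sin (u a + v a) * Real.sin (2 * b a)) P :=
    hbd _ ((Real.measurable_sin.comp (hum.add hvm)).mul
      (Real.measurable_sin.comp (hb.const_mul 2)))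
      (fun a => by
        calc |Real.sin (u a + v a) * Real.sin (2 * b a)|
            = |Real.sin (u a + v a)| * |Real.sin (2 * b a)| := abs_mul _ _
          _ ≤ 1 * 2 := mul_le_mul (Real.abs_sin_le_one _) (hs2 _) (abs_nonneg _) zero_le_one
          _ = 2 := one_mul 2)
  have hrw : (∫ a, 2 * Real.cos (u a + b a) * Real.cos (v a + b a) ∂P)
      = (∫ a, Real.cos (∑ i, ω a i * (x i - x' i)) ∂P)
        + ((∫ a, Real.cos (u a + v a) * Real.cos (2 * b a) ∂P)
          - (∫ a, Real.sin (u a + v a) * Real.sin (2 * b a) ∂P)) := by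
    calc (∫ a, 2 * Real.cos (u a + b a) * Real.cos (v a + b a) ∂P)
        = ∫ a, (Real.cos (∑ i, ω a i * (x i - x' i))
            + (Real.cos (u a + v a) * Real.cos (2 * b a)
              - Real.sin (u a + v a) * Real.sin (2 * b a))) ∂P :=
          integral_congr_ae (Filter.Eventually.of_forall hpt)
      _ = (∫ a, Real.cos (∑ i, ω a i * (x i - x' i)) ∂P)
            + ∫ a, (Real.cos (u a + v a) * Real.cos (2 * b a)
              - Real.sin (u a + v a) * Real.sin (2 * b a)) ∂P :=
          integral_add hi1 (hi2.sub hi3)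
      _ = _ := by rw [integral_sub hi2 hi3]
  -- independence
  have hindep2 : ∀ (f g : ℝ → ℝ), Measurable f → Measurable g →
      IndepFun (fun a => f (u a + v a)) (fun a => g (2 * b a)) P := by
    intro f g hf hg
    exact hindep.comp
      (hf.comp ((Finset.measurable_sum Finset.univ
        (fun i _ => (measurable_pi_apply (X := fun _ : Fin d => ℝ) i).mul_const (x i))).add
        (Finset.measurable_sum Finset.univ
        (fun i _ => (measurable_pi_apply (X := fun _ : Fin d => ℝ) i).mul_const (x' i)))))
      (hg.comp (measurable_id.const_mul 2))
  have hcos0 : (∫ a, Real.cos (2 * b a) ∂P) = 0 := by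
    apply rff_aux_zero P b hb hbunif (fun t => Real.cos (2 * t)) (by fun_prop)
    rw [intervalIntegral.integral_comp_mul_left Real.cos (two_ne_zero (α := ℝ)),
      integral_cos]
    have h4 : (2 * (2 * Real.pi)) = ((4:ℕ):ℝ) * Real.pi := by push_cast; ring
    rw [h4, Real.sin_nat_mul_pi]
    simp
  have hsin0 : (∫ a, Real.sin (2 * b a) ∂P) = 0 := by
    apply rff_aux_zero P b hb hbunif (fun t => Real.sin (2 * t)) (by fun_prop)
    rw [intervalIntegral.integral_comp_mul_left Real.sin (two_ne_zero (α := ℝ)),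
      integral_sin]
    have h4 : (2 * (2 * Real.pi)) = ((2:ℕ):ℝ) * (2 * Real.pi) := by push_cast; ring
    rw [h4, Real.cos_nat_mul_two_pi]
    simp
  have e2 : (∫ a, Real.cos (u a + v a) * Real.cos (2 * b a) ∂P)
      = (∫ a, Real.cos (u a + v a) ∂P) * (∫ a, Real.cos (2 * b a) ∂P) :=
    (hindep2 Real.cos Real.cos Real.measurable_cos Real.measurable_cos).integral_fun_mul_eq_mul_integral
      (Real.measurable_cos.comp (hum.add hvm)).aestronglyMeasurable
      (Real.measurable_cos.comp (hb.const_mul 2)).aestronglyMeasurable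
  have e3 : (∫ a, Real.sin (u a + v a) * Real.sin (2 * b a) ∂P)
      = (∫ a, Real.sin (u a + v a) ∂P) * (∫ a, Real.sin (2 * b a) ∂P) :=
    (hindep2 Real.sin Real.sin Real.measurable_sin Real.measurable_sin).integral_fun_mul_eq_mul_integral
      (Real.measurable_sin.comp (hum.add hvm)).aestronglyMeasurable
      (Real.measurable_sin.comp (hb.const_mul 2)).aestronglyMeasurable
  rw [hrw, e2, e3, hcos0, hsin0]
  ring
end

section
/- For fixed x, x' ∈ ℝ^d with x ≠ x', the Matérn covariance K_Matern(x, x'; ν) = (τ²/(Γ(ν) 2^{ν−1})) (√(2ν) r/η)^ν 𝖪_ν(√(2ν) r/η) with r = ‖x − x'‖ converges, as ν → ∞, to the Gaussian covariance τ² exp(−r²/(2η²)). -/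
open Real MeasureTheory

open Set Filter

/-- Modified Bessel function of the second kind, via its integral representation
`𝖪_ν(z) = ∫₀^∞ exp(−z cosh t) cosh(ν t) dt` (valid for `z > 0`). -/
noncomputable def besselK (ν z : ℝ) : ℝ :=
  ∫ t in Set.Ioi (0 : ℝ), Real.exp (-z * Real.cosh t) * Real.cosh (ν * t)

lemma integrable_w {ν : ℝ} (hν : 0 < ν) :
    IntegrableOn (fun u : ℝ => u ^ (ν - 1) * Real.exp (-u)) (Set.Ioi 0) :=
  (Real.GammaIntegral_convergent hν).congr_fun
    (fun u _ => mul_comm _ _) measurableSet_Ioi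

lemma int_w {ν : ℝ} (hν : 0 < ν) :
    ∫ u in Set.Ioi (0:ℝ), u ^ (ν - 1) * Real.exp (-u) = Real.Gamma ν := by
  rw [Real.Gamma_eq_integral hν]
  exact setIntegral_congr_fun measurableSet_Ioi fun u _ => mul_comm _ _

lemma w_decomp {ν : ℝ} {u : ℝ} (hu : u ∈ Set.Ioi (0:ℝ)) :
    (u - ν) ^ 2 * (u ^ (ν - 1) * Real.exp (-u)) =
      u ^ (ν + 2 - 1) * Real.exp (-u) - 2 * ν * (u ^ (ν + 1 - 1) * Real.exp (-u))
        + ν ^ 2 * (u ^ (ν - 1) * Real.exp (-u)) := by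
  have hu' : (0:ℝ) < u := hu
  have h1 : u ^ (ν + 2 - 1) = u ^ (ν - 1) * u ^ (2:ℕ) := by
    rw [show ν + 2 - 1 = (ν - 1) + (2:ℕ) by push_cast; ring, Real.rpow_add hu',
      Real.rpow_natCast]
  have h2 : u ^ (ν + 1 - 1) = u ^ (ν - 1) * u ^ (1:ℕ) := by
    rw [show ν + 1 - 1 = (ν - 1) + (1:ℕ) by push_cast; ring, Real.rpow_add hu',
      Real.rpow_natCast]
  rw [h1, h2]
  ring

lemma integrable_sq {ν : ℝ} (hν : 0 < ν) :
    IntegrableOn (fun u : ℝ => (u - ν) ^ 2 * (u ^ (ν - 1) * Real.exp (-u))) (Set.Ioi 0) := by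
  have h2 : (0:ℝ) < ν + 2 := by linarith
  have h1 : (0:ℝ) < ν + 1 := by linarith
  have : IntegrableOn (fun u : ℝ =>
      u ^ (ν + 2 - 1) * Real.exp (-u) - 2 * ν * (u ^ (ν + 1 - 1) * Real.exp (-u))
        + ν ^ 2 * (u ^ (ν - 1) * Real.exp (-u))) (Set.Ioi 0) :=
    (((integrable_w h2).sub (((integrable_w h1)).const_mul (2 * ν))).add
      ((integrable_w hν).const_mul (ν ^ 2)))
  exact this.congr_fun (fun u hu => (w_decomp hu).symm) measurableSet_Ioi

lemma int_sq {ν : ℝ} (hν : 0 < ν) :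
    ∫ u in Set.Ioi (0:ℝ), (u - ν) ^ 2 * (u ^ (ν - 1) * Real.exp (-u)) = ν * Real.Gamma ν := by
  have h2 : (0:ℝ) < ν + 2 := by linarith
  have h1 : (0:ℝ) < ν + 1 := by linarith
  rw [setIntegral_congr_fun measurableSet_Ioi (fun u hu => w_decomp (ν := ν) hu)]
  have e1 : (∫ u in Set.Ioi (0:ℝ),
      (u ^ (ν + 2 - 1) * Real.exp (-u) - 2 * ν * (u ^ (ν + 1 - 1) * Real.exp (-u))
        + ν ^ 2 * (u ^ (ν - 1) * Real.exp (-u)))) =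
      (∫ u in Set.Ioi (0:ℝ), (u ^ (ν + 2 - 1) * Real.exp (-u)
        - 2 * ν * (u ^ (ν + 1 - 1) * Real.exp (-u)))) +
      ∫ u in Set.Ioi (0:ℝ), ν ^ 2 * (u ^ (ν - 1) * Real.exp (-u)) :=
    integral_add ((integrable_w h2).sub ((integrable_w h1).const_mul (2 * ν)))
      ((integrable_w hν).const_mul (ν ^ 2))
  have e2 : (∫ u in Set.Ioi (0:ℝ), (u ^ (ν + 2 - 1) * Real.exp (-u)
        - 2 * ν * (u ^ (ν + 1 - 1) * Real.exp (-u)))) =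
      (∫ u in Set.Ioi (0:ℝ), u ^ (ν + 2 - 1) * Real.exp (-u)) -
      ∫ u in Set.Ioi (0:ℝ), 2 * ν * (u ^ (ν + 1 - 1) * Real.exp (-u)) :=
    integral_sub (integrable_w h2) ((integrable_w h1).const_mul (2 * ν))
  rw [e1, e2, integral_const_mul, integral_const_mul, int_w h2, int_w h1, int_w hν]
  have g2 : Real.Gamma (ν + 2) = (ν + 1) * (ν * Real.Gamma ν) := by
    rw [show ν + 2 = (ν + 1) + 1 by ring, Real.Gamma_add_one (by linarith),
      Real.Gamma_add_one hν.ne']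
  rw [g2, Real.Gamma_add_one hν.ne']; ring

/-- Chebyshev-type bound for the Gamma weight. -/
lemma chebyshev {ν δ : ℝ} (hν : 0 < ν) (hδ : 0 < δ) {S : Set ℝ}
    (hS : MeasurableSet S) (hsub : S ⊆ Set.Ioi 0)
    (hfar : ∀ u ∈ S, δ * ν ≤ |u - ν|) :
    ∫ u in S, u ^ (ν - 1) * Real.exp (-u) ≤ Real.Gamma ν / (ν * δ ^ 2) := by
  have hδν : (0:ℝ) < δ * ν := mul_pos hδ hν
  have key : ∀ u ∈ S, u ^ (ν - 1) * Real.exp (-u) ≤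
      ((u - ν) / (δ * ν)) ^ 2 * (u ^ (ν - 1) * Real.exp (-u)) := by
    intro u hu
    have hw : 0 ≤ u ^ (ν - 1) * Real.exp (-u) :=
      mul_nonneg (Real.rpow_nonneg (le_of_lt (hsub hu)) _) (Real.exp_nonneg _)
    have h1 : (1:ℝ) ≤ ((u - ν) / (δ * ν)) ^ 2 := by
      have := hfar u hu
      rw [div_pow, le_div_iff₀ (by positivity)]
      calc (1:ℝ) * ((δ*ν)^2) = (δ*ν)^2 := by ring
      _ ≤ |u - ν| ^ 2 := by apply pow_le_pow_left₀ hδν.le this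
      _ = (u - ν)^2 := sq_abs _
    nlinarith [mul_le_mul_of_nonneg_right h1 hw]
  have hint : IntegrableOn (fun u : ℝ => ((u - ν) / (δ * ν)) ^ 2 *
      (u ^ (ν - 1) * Real.exp (-u))) (Set.Ioi 0) := by
    apply IntegrableOn.congr_fun ((integrable_sq hν).const_mul ((δ*ν)^2)⁻¹) _
      measurableSet_Ioi
    intro u _
    simp only [div_pow]
    ring
  calc ∫ u in S, u ^ (ν - 1) * Real.exp (-u)
      ≤ ∫ u in S, ((u - ν) / (δ * ν)) ^ 2 * (u ^ (ν - 1) * Real.exp (-u)) :=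
        setIntegral_mono_on ((integrable_w hν).mono_set hsub) (hint.mono_set hsub) hS key
    _ ≤ ∫ u in Set.Ioi (0:ℝ), ((u - ν) / (δ * ν)) ^ 2 * (u ^ (ν - 1) * Real.exp (-u)) := by
        apply setIntegral_mono_set hint
        · filter_upwards [ae_restrict_mem measurableSet_Ioi] with u hu
          have : (0:ℝ) < u := hu
          positivity
        · exact HasSubset.Subset.eventuallyLE hsub
    _ = Real.Gamma ν / (ν * δ ^ 2) := by
        have h : ∀ u : ℝ, ((u - ν) / (δ * ν)) ^ 2 * (u ^ (ν - 1) * Real.exp (-u))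
            = ((δ*ν)^2)⁻¹ * ((u - ν) ^ 2 * (u ^ (ν - 1) * Real.exp (-u))) := by
          intro u; rw [div_pow]; ring
        simp_rw [h]
        rw [integral_const_mul, int_sq hν]
        field_simp

/-! ### The perturbed Gamma integral -/

lemma measurable_Jfun (ν b : ℝ) :
    Measurable (fun u : ℝ => u ^ (ν - 1) * Real.exp (-u - ν * b / u)) := by
  fun_prop

lemma Jfun_nonneg {ν b : ℝ} {u : ℝ} (hu : (0:ℝ) < u) :
    0 ≤ u ^ (ν - 1) * Real.exp (-u - ν * b / u) :=
  mul_nonneg (Real.rpow_nonneg hu.le _) (Real.exp_nonneg _)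

lemma Jfun_le_w {ν b : ℝ} (hν : 0 < ν) (hb : 0 ≤ b) {u : ℝ} (hu : (0:ℝ) < u) :
    u ^ (ν - 1) * Real.exp (-u - ν * b / u) ≤ u ^ (ν - 1) * Real.exp (-u) := by
  have h : Real.exp (-u - ν * b / u) ≤ Real.exp (-u) := by
    apply Real.exp_le_exp.2
    have : 0 ≤ ν * b / u := by positivity
    linarith
  exact mul_le_mul_of_nonneg_left h (Real.rpow_nonneg hu.le _)

lemma integrable_J {ν b : ℝ} (hν : 0 < ν) (hb : 0 ≤ b) :
    IntegrableOn (fun u : ℝ => u ^ (ν - 1) * Real.exp (-u - ν * b / u)) (Set.Ioi 0) := by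
  apply Integrable.mono' (integrable_w hν)
    ((measurable_Jfun ν b).aestronglyMeasurable)
  filter_upwards [ae_restrict_mem measurableSet_Ioi] with u hu
  have hu' : (0:ℝ) < u := hu
  rw [Real.norm_eq_abs, abs_of_nonneg (Jfun_nonneg hu')]
  exact Jfun_le_w hν hb hu'

lemma J_lower {ν δ b : ℝ} (hν : 0 < ν) (hδ : 0 < δ) (hδ1 : δ < 1) (hb : 0 ≤ b) :
    Real.exp (-(b / (1 - δ))) * (Real.Gamma ν - Real.Gamma ν / (ν * δ ^ 2)) ≤
      ∫ u in Set.Ioi (0:ℝ), u ^ (ν - 1) * Real.exp (-u - ν * b / u) := by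
  set a := ν * (1 - δ) with ha_def
  have ha : (0:ℝ) < a := by
    apply mul_pos hν; linarith
  -- tail bound for the weight below a
  have hcheb : ∫ u in Set.Ioc (0:ℝ) a, u ^ (ν - 1) * Real.exp (-u) ≤
      Real.Gamma ν / (ν * δ ^ 2) := by
    apply chebyshev hν hδ measurableSet_Ioc Ioc_subset_Ioi_self
    intro u hu
    have h1 : u ≤ a := hu.2
    have : δ * ν ≤ ν - u := by rw [ha_def] at h1; nlinarith
    calc δ * ν ≤ ν - u := this
    _ ≤ |ν - u| := le_abs_self _
    _ = |u - ν| := abs_sub_comm _ _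
  have hsplit : (∫ u in Set.Ioc (0:ℝ) a, u ^ (ν - 1) * Real.exp (-u)) +
      (∫ u in Set.Ioi a, u ^ (ν - 1) * Real.exp (-u)) = Real.Gamma ν := by
    rw [← int_w hν, ← setIntegral_union (Set.Ioc_disjoint_Ioi le_rfl) measurableSet_Ioi
      ((integrable_w hν).mono_set Set.Ioc_subset_Ioi_self)
      ((integrable_w hν).mono_set (Set.Ioi_subset_Ioi ha.le)),
      Set.Ioc_union_Ioi_eq_Ioi ha.le]
  have htail : Real.Gamma ν - Real.Gamma ν / (ν * δ ^ 2) ≤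
      ∫ u in Set.Ioi a, u ^ (ν - 1) * Real.exp (-u) := by linarith
  -- pointwise bound on Ioi a
  have hpt : ∀ u ∈ Set.Ioi a, Real.exp (-(b / (1 - δ))) * (u ^ (ν - 1) * Real.exp (-u)) ≤
      u ^ (ν - 1) * Real.exp (-u - ν * b / u) := by
    intro u hu
    have hua : a < u := hu
    have hu' : (0:ℝ) < u := ha.trans hua
    have hdiv : ν * b / u ≤ b / (1 - δ) := by
      rw [div_le_div_iff₀ hu' (by linarith)]
      have : ν * b * (1 - δ) = a * b := by rw [ha_def]; ring
      rw [this, mul_comm b u]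
      exact mul_le_mul_of_nonneg_right hua.le hb
    have : Real.exp (-(b / (1 - δ))) * Real.exp (-u) ≤ Real.exp (-u - ν * b / u) := by
      rw [← Real.exp_add]
      apply Real.exp_le_exp.2
      linarith
    calc Real.exp (-(b / (1 - δ))) * (u ^ (ν - 1) * Real.exp (-u))
        = u ^ (ν - 1) * (Real.exp (-(b / (1 - δ))) * Real.exp (-u)) := by ring
      _ ≤ u ^ (ν - 1) * Real.exp (-u - ν * b / u) :=
        mul_le_mul_of_nonneg_left this (Real.rpow_nonneg hu'.le _)
  calc Real.exp (-(b / (1 - δ))) * (Real.Gamma ν - Real.Gamma ν / (ν * δ ^ 2))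
      ≤ Real.exp (-(b / (1 - δ))) * ∫ u in Set.Ioi a, u ^ (ν - 1) * Real.exp (-u) :=
        mul_le_mul_of_nonneg_left htail (Real.exp_nonneg _)
    _ = ∫ u in Set.Ioi a, Real.exp (-(b / (1 - δ))) * (u ^ (ν - 1) * Real.exp (-u)) :=
        (integral_const_mul _ _).symm
    _ ≤ ∫ u in Set.Ioi a, u ^ (ν - 1) * Real.exp (-u - ν * b / u) := by
        apply setIntegral_mono_on
          (((integrable_w hν).mono_set (Set.Ioi_subset_Ioi ha.le)).const_mul _)
          ((integrable_J hν hb).mono_set (Set.Ioi_subset_Ioi ha.le)) measurableSet_Ioi hpt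
    _ ≤ ∫ u in Set.Ioi (0:ℝ), u ^ (ν - 1) * Real.exp (-u - ν * b / u) := by
        apply setIntegral_mono_set (integrable_J hν hb)
        · filter_upwards [ae_restrict_mem measurableSet_Ioi] with u hu
          exact Jfun_nonneg hu
        · exact HasSubset.Subset.eventuallyLE (Set.Ioi_subset_Ioi ha.le)

lemma J_upper {ν δ b : ℝ} (hν : 0 < ν) (hδ : 0 < δ) (hb : 0 ≤ b) :
    (∫ u in Set.Ioi (0:ℝ), u ^ (ν - 1) * Real.exp (-u - ν * b / u)) ≤
      Real.exp (-(b / (1 + δ))) * Real.Gamma ν + Real.Gamma ν / (ν * δ ^ 2) := by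
  set a := ν * (1 + δ) with ha_def
  have ha : (0:ℝ) < a := by apply mul_pos hν; linarith
  have hsplit : (∫ u in Set.Ioi (0:ℝ), u ^ (ν - 1) * Real.exp (-u - ν * b / u)) =
      (∫ u in Set.Ioc (0:ℝ) a, u ^ (ν - 1) * Real.exp (-u - ν * b / u)) +
      (∫ u in Set.Ioi a, u ^ (ν - 1) * Real.exp (-u - ν * b / u)) := by
    rw [← setIntegral_union (Set.Ioc_disjoint_Ioi le_rfl) measurableSet_Ioi
      ((integrable_J hν hb).mono_set Set.Ioc_subset_Ioi_self)
      ((integrable_J hν hb).mono_set (Set.Ioi_subset_Ioi ha.le)),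
      Set.Ioc_union_Ioi_eq_Ioi ha.le]
  have hpart1 : (∫ u in Set.Ioc (0:ℝ) a, u ^ (ν - 1) * Real.exp (-u - ν * b / u)) ≤
      Real.exp (-(b / (1 + δ))) * Real.Gamma ν := by
    have hpt : ∀ u ∈ Set.Ioc (0:ℝ) a, u ^ (ν - 1) * Real.exp (-u - ν * b / u) ≤
        Real.exp (-(b / (1 + δ))) * (u ^ (ν - 1) * Real.exp (-u)) := by
      intro u hu
      have hu' : (0:ℝ) < u := hu.1
      have hdiv : b / (1 + δ) ≤ ν * b / u := by
        rw [div_le_div_iff₀ (by linarith) hu']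
        have : ν * b * (1 + δ) = a * b := by rw [ha_def]; ring
        rw [this, mul_comm b u]
        exact mul_le_mul_of_nonneg_right hu.2 hb
      have : Real.exp (-u - ν * b / u) ≤ Real.exp (-(b / (1 + δ))) * Real.exp (-u) := by
        rw [← Real.exp_add]
        apply Real.exp_le_exp.2
        linarith
      calc u ^ (ν - 1) * Real.exp (-u - ν * b / u)
          ≤ u ^ (ν - 1) * (Real.exp (-(b / (1 + δ))) * Real.exp (-u)) :=
            mul_le_mul_of_nonneg_left this (Real.rpow_nonneg hu'.le _)
        _ = Real.exp (-(b / (1 + δ))) * (u ^ (ν - 1) * Real.exp (-u)) := by ring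
    calc (∫ u in Set.Ioc (0:ℝ) a, u ^ (ν - 1) * Real.exp (-u - ν * b / u))
        ≤ ∫ u in Set.Ioc (0:ℝ) a, Real.exp (-(b / (1 + δ))) * (u ^ (ν - 1) * Real.exp (-u)) :=
          setIntegral_mono_on ((integrable_J hν hb).mono_set Set.Ioc_subset_Ioi_self)
            (((integrable_w hν).mono_set Set.Ioc_subset_Ioi_self).const_mul _)
            measurableSet_Ioc hpt
      _ = Real.exp (-(b / (1 + δ))) * ∫ u in Set.Ioc (0:ℝ) a, u ^ (ν - 1) * Real.exp (-u) :=
          integral_const_mul _ _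
      _ ≤ Real.exp (-(b / (1 + δ))) * Real.Gamma ν := by
          apply mul_le_mul_of_nonneg_left _ (Real.exp_nonneg _)
          rw [← int_w hν]
          apply setIntegral_mono_set (integrable_w hν)
          · filter_upwards [ae_restrict_mem measurableSet_Ioi] with u hu
            have : (0:ℝ) < u := hu
            positivity
          · exact HasSubset.Subset.eventuallyLE Set.Ioc_subset_Ioi_self
  have hpart2 : (∫ u in Set.Ioi a, u ^ (ν - 1) * Real.exp (-u - ν * b / u)) ≤
      Real.Gamma ν / (ν * δ ^ 2) := by
    have hpt : ∀ u ∈ Set.Ioi a, u ^ (ν - 1) * Real.exp (-u - ν * b / u) ≤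
        u ^ (ν - 1) * Real.exp (-u) := fun u hu => Jfun_le_w hν hb (ha.trans hu)
    calc (∫ u in Set.Ioi a, u ^ (ν - 1) * Real.exp (-u - ν * b / u))
        ≤ ∫ u in Set.Ioi a, u ^ (ν - 1) * Real.exp (-u) :=
          setIntegral_mono_on ((integrable_J hν hb).mono_set (Set.Ioi_subset_Ioi ha.le))
            ((integrable_w hν).mono_set (Set.Ioi_subset_Ioi ha.le)) measurableSet_Ioi hpt
      _ ≤ Real.Gamma ν / (ν * δ ^ 2) := by
          apply chebyshev hν hδ measurableSet_Ioi (Set.Ioi_subset_Ioi ha.le)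
          intro u hu
          have : a < u := hu
          have : δ * ν ≤ u - ν := by rw [ha_def] at this; nlinarith
          calc δ * ν ≤ u - ν := this
          _ ≤ |u - ν| := le_abs_self _
  linarith [hsplit, hpart1, hpart2]

lemma tendsto_J {b : ℝ} (hb : 0 ≤ b) :
    Filter.Tendsto
      (fun ν : ℝ => (∫ u in Set.Ioi (0:ℝ), u ^ (ν - 1) * Real.exp (-u - ν * b / u)) /
        Real.Gamma ν)
      Filter.atTop (nhds (Real.exp (-b))) := by
  rw [Metric.tendsto_atTop]
  intro ε hε
  -- choose δ
  have hc1 : Filter.Tendsto (fun δ : ℝ => Real.exp (-(b / (1 - δ)))) (nhdsWithin 0 (Set.Ioi 0))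
      (nhds (Real.exp (-b))) := by
    have hcont : ContinuousAt (fun δ : ℝ => Real.exp (-(b / (1 - δ)))) 0 := by
      apply ContinuousAt.rexp
      apply ContinuousAt.neg
      apply ContinuousAt.div continuousAt_const (continuousAt_const.sub continuousAt_id)
      norm_num
    have h0 : Real.exp (-(b / (1 - 0))) = Real.exp (-b) := by norm_num
    simpa [h0] using hcont.continuousWithinAt.tendsto
  have hc2 : Filter.Tendsto (fun δ : ℝ => Real.exp (-(b / (1 + δ)))) (nhdsWithin 0 (Set.Ioi 0))
      (nhds (Real.exp (-b))) := by
    have hcont : ContinuousAt (fun δ : ℝ => Real.exp (-(b / (1 + δ)))) 0 := by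
      apply ContinuousAt.rexp
      apply ContinuousAt.neg
      apply ContinuousAt.div continuousAt_const (continuousAt_const.add continuousAt_id)
      norm_num
    have h0 : Real.exp (-(b / (1 + 0))) = Real.exp (-b) := by norm_num
    simpa [h0] using hcont.continuousWithinAt.tendsto
  have ev1 : ∀ᶠ δ in nhdsWithin (0:ℝ) (Set.Ioi 0),
      |Real.exp (-(b / (1 - δ))) - Real.exp (-b)| < ε / 4 := by
    have := (Metric.tendsto_nhds.mp hc1) (ε / 4) (by linarith)
    simpa [Real.dist_eq] using this
  have ev2 : ∀ᶠ δ in nhdsWithin (0:ℝ) (Set.Ioi 0),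
      |Real.exp (-(b / (1 + δ))) - Real.exp (-b)| < ε / 4 := by
    have := (Metric.tendsto_nhds.mp hc2) (ε / 4) (by linarith)
    simpa [Real.dist_eq] using this
  have ev3 : ∀ᶠ δ in nhdsWithin (0:ℝ) (Set.Ioi 0), δ ∈ Set.Ioo (0:ℝ) 1 :=
    Ioo_mem_nhdsGT_of_mem ⟨le_rfl, zero_lt_one⟩
  obtain ⟨δ, ⟨hδ1, hδ2⟩, hδ3⟩ := ((ev1.and ev2).and ev3).exists
  have hδ0 : (0:ℝ) < δ := hδ3.1
  have hδlt1 : δ < 1 := hδ3.2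
  refine ⟨max 1 (max (1 / δ ^ 2) (4 / (ε * δ ^ 2))), fun ν hν => ?_⟩
  have hν1 : (1:ℝ) ≤ ν := le_trans (le_max_left _ _) hν
  have hν0 : (0:ℝ) < ν := by linarith
  have hνa : 1 / δ ^ 2 ≤ ν := le_trans (le_trans (le_max_left _ _) (le_max_right _ _)) hν
  have hνb : 4 / (ε * δ ^ 2) ≤ ν := le_trans (le_trans (le_max_right _ _) (le_max_right _ _)) hν
  set s : ℝ := 1 / (ν * δ ^ 2) with hs_def
  have hs0 : 0 ≤ s := by positivity
  have hs1 : s ≤ 1 := by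
    rw [hs_def, div_le_one (by positivity)]
    have := mul_le_mul_of_nonneg_right hνa (sq_nonneg δ)
    calc (1:ℝ) = (1 / δ ^ 2) * δ ^ 2 := by field_simp
    _ ≤ ν * δ ^ 2 := this
  have hsε : s ≤ ε / 4 := by
    rw [hs_def, div_le_div_iff₀ (by positivity) (by linarith)]
    have := mul_le_mul_of_nonneg_right hνb (mul_nonneg hε.le (sq_nonneg δ))
    calc (1:ℝ) * 4 = (4 / (ε * δ ^ 2)) * (ε * δ ^ 2) := by field_simp
    _ ≤ ν * (ε * δ ^ 2) := this
    _ = ν * δ ^ 2 * ε := by ring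
    _ = ε * (ν * δ ^ 2) := by ring
  have hG : 0 < Real.Gamma ν := Real.Gamma_pos_of_pos hν0
  have hΓs : Real.Gamma ν / (ν * δ ^ 2) = s * Real.Gamma ν := by
    rw [hs_def]; ring
  have hE1le : Real.exp (-(b / (1 - δ))) ≤ 1 := by
    rw [Real.exp_le_one_iff]
    have : 0 ≤ b / (1 - δ) := div_nonneg hb (by linarith)
    linarith
  have hl := J_lower (b := b) hν0 hδ0 hδlt1 hb
  have hu := J_upper (b := b) (δ := δ) hν0 hδ0 hb
  rw [hΓs] at hl hu
  set J := ∫ u in Set.Ioi (0:ℝ), u ^ (ν - 1) * Real.exp (-u - ν * b / u) with hJ_def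
  have hlow : Real.exp (-(b / (1 - δ))) - s ≤ J / Real.Gamma ν := by
    rw [le_div_iff₀ hG]
    have key : (Real.exp (-(b / (1 - δ))) - s) * Real.Gamma ν ≤
        Real.exp (-(b / (1 - δ))) * (Real.Gamma ν - s * Real.Gamma ν) := by
      nlinarith [mul_nonneg hs0 hG.le]
    linarith
  have hhigh : J / Real.Gamma ν ≤ Real.exp (-(b / (1 + δ))) + s := by
    rw [div_le_iff₀ hG]
    nlinarith
  rw [Real.dist_eq, abs_lt]
  have h1 := abs_lt.1 hδ1
  have h2 := abs_lt.1 hδ2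
  constructor <;> nlinarith

/-! ### The Bessel integral identity -/

lemma subst_pointwise {ν z : ℝ} (hz : 0 < z) (t : ℝ) :
    |z / 2 * Real.exp t| *
      ((z / 2 * Real.exp t) ^ (ν - 1) *
        Real.exp (-(z / 2 * Real.exp t) - z ^ 2 / (4 * (z / 2 * Real.exp t)))) =
    (z / 2) ^ ν * (Real.exp (ν * t) * Real.exp (-z * Real.cosh t)) := by
  have hw : (0:ℝ) < z / 2 * Real.exp t := by positivity
  have e1 : (z / 2 * Real.exp t) * (z / 2 * Real.exp t) ^ (ν - 1)
      = (z / 2 * Real.exp t) ^ ν := by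
    rw [Real.rpow_sub_one hw.ne']
    field_simp
  have e2 : (z / 2 * Real.exp t) ^ ν = (z / 2) ^ ν * Real.exp (ν * t) := by
    rw [Real.mul_rpow (by positivity) (Real.exp_nonneg _), ← Real.exp_mul, mul_comm t ν]
  have e3 : z ^ 2 / (4 * (z / 2 * Real.exp t)) = z / 2 * Real.exp (-t) := by
    rw [Real.exp_neg]
    field_simp [Real.exp_ne_zero]
    ring
  have e4 : -(z / 2 * Real.exp t) - z / 2 * Real.exp (-t) = -z * Real.cosh t := by
    rw [Real.cosh_eq]
    ring
  rw [abs_of_pos hw, ← mul_assoc, e1, e2, e3, e4, mul_assoc]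

lemma besselK_identity {ν z : ℝ} (hν : 0 < ν) (hz : 0 < z) :
    (∫ u in Set.Ioi (0:ℝ), u ^ (ν - 1) * Real.exp (-u - z ^ 2 / (4 * u))) =
      (z / 2) ^ ν * (2 * besselK ν z) := by
  set g : ℝ → ℝ := fun u => u ^ (ν - 1) * Real.exp (-u - z ^ 2 / (4 * u)) with hg_def
  set f : ℝ → ℝ := fun t => z / 2 * Real.exp t with hf_def
  have hderiv : ∀ x ∈ (Set.univ : Set ℝ), HasDerivWithinAt f (z / 2 * Real.exp x) Set.univ x :=
    fun x _ => ((Real.hasDerivAt_exp x).const_mul (z / 2)).hasDerivWithinAt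
  have hinj : Set.InjOn f Set.univ := by
    intro s _ t _ h
    simp only [hf_def] at h
    have := mul_left_cancel₀ (by positivity : (z/2 : ℝ) ≠ 0) h
    exact Real.exp_injective this
  have himg : f '' Set.univ = Set.Ioi 0 := by
    ext u
    simp only [Set.image_univ, Set.mem_range, Set.mem_Ioi, hf_def]
    constructor
    · rintro ⟨t, rfl⟩; positivity
    · intro hu
      refine ⟨Real.log (u / (z / 2)), ?_⟩
      rw [Real.exp_log (by positivity)]
      field_simp
  -- the integrand as a function of t
  have hmain : ∀ u : ℝ, z ^ 2 / (4 * u) = ν * (z ^ 2 / (4 * ν)) / u := by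
    intro u
    have h4 : ν * (z ^ 2 / (4 * ν)) = z ^ 2 / 4 := by
      field_simp
    rw [h4, div_div]
  have hgeq : IntegrableOn g (Set.Ioi 0) := by
    have hge : g = fun u => u ^ (ν - 1) * Real.exp (-u - ν * (z ^ 2 / (4 * ν)) / u) := by
      funext u
      simp only [hg_def]
      rw [hmain u]
    rw [hge]
    exact integrable_J hν (by positivity)
  have hchange := integral_image_eq_integral_abs_deriv_smul MeasurableSet.univ hderiv hinj g
  rw [himg] at hchange
  have hchange2 : (∫ u in Set.Ioi (0:ℝ), g u) =
      ∫ t : ℝ, (z / 2) ^ ν * (Real.exp (ν * t) * Real.exp (-z * Real.cosh t)) := by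
    rw [hchange, MeasureTheory.setIntegral_univ]
    congr 1
    funext t
    have := subst_pointwise (ν := ν) hz t
    simpa [smul_eq_mul, hf_def, hg_def] using this
  -- integrability of the t-integrand
  have hintt : Integrable (fun t : ℝ => Real.exp (ν * t) * Real.exp (-z * Real.cosh t)) := by
    have hiff := integrableOn_image_iff_integrableOn_abs_deriv_smul
      MeasurableSet.univ hderiv hinj g
    rw [himg] at hiff
    have h1 : IntegrableOn (fun t : ℝ => |z / 2 * Real.exp t| • g (f t)) Set.univ :=
      hiff.mp hgeq
    rw [integrableOn_univ] at h1
    have h2 : Integrable (fun t : ℝ =>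
        (z / 2) ^ ν * (Real.exp (ν * t) * Real.exp (-z * Real.cosh t))) := by
      apply h1.congr
      filter_upwards with t
      have := subst_pointwise (ν := ν) hz t
      simpa [smul_eq_mul, hf_def, hg_def] using this
    have h3 := h2.const_mul (((z / 2 : ℝ) ^ ν)⁻¹)
    apply h3.congr
    filter_upwards with t
    have hzν : ((z / 2 : ℝ) ^ ν) ≠ 0 := by positivity
    field_simp
  -- split the t-integral
  have hsplit : (∫ t : ℝ, Real.exp (ν * t) * Real.exp (-z * Real.cosh t)) =
      (∫ t in Set.Iic (0:ℝ), Real.exp (ν * t) * Real.exp (-z * Real.cosh t)) +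
      ∫ t in Set.Ioi (0:ℝ), Real.exp (ν * t) * Real.exp (-z * Real.cosh t) :=
    (intervalIntegral.integral_Iic_add_Ioi hintt.integrableOn hintt.integrableOn).symm
  have hrefl : (∫ t in Set.Iic (0:ℝ), Real.exp (ν * t) * Real.exp (-z * Real.cosh t)) =
      ∫ t in Set.Ioi (0:ℝ), Real.exp (-(ν * t)) * Real.exp (-z * Real.cosh t) := by
    rw [show Set.Iic (0:ℝ) = Set.Iic (-(0:ℝ)) by norm_num,
      ← integral_comp_neg_Ioi]
    congr 1
    funext t
    rw [Real.cosh_neg]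
    ring_nf
  have hsum : (∫ t in Set.Ioi (0:ℝ), Real.exp (-(ν * t)) * Real.exp (-z * Real.cosh t)) +
      (∫ t in Set.Ioi (0:ℝ), Real.exp (ν * t) * Real.exp (-z * Real.cosh t)) =
      2 * besselK ν z := by
    have hint1 : IntegrableOn (fun t : ℝ => Real.exp (-(ν * t)) * Real.exp (-z * Real.cosh t))
        (Set.Ioi 0) := by
      have := hintt.comp_neg
      have h2 : Integrable (fun t : ℝ => Real.exp (-(ν * t)) * Real.exp (-z * Real.cosh t)) := by
        apply this.congr
        filter_upwards with t
        rw [Real.cosh_neg]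
        ring_nf
      exact h2.integrableOn
    have hpt : ∀ t : ℝ, Real.exp (-(ν * t)) * Real.exp (-z * Real.cosh t) +
        Real.exp (ν * t) * Real.exp (-z * Real.cosh t) =
        2 * (Real.exp (-z * Real.cosh t) * Real.cosh (ν * t)) := by
      intro t
      rw [Real.cosh_eq (ν * t)]
      ring
    rw [← integral_add hint1 hintt.integrableOn]
    rw [besselK, ← integral_const_mul]
    exact setIntegral_congr_fun measurableSet_Ioi fun t _ => hpt t
  rw [hchange2, integral_const_mul, hsplit, hrefl, hsum]

/-- Matérn covariance function with smoothness `ν`, variance `τ²`, length scale `η`,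
evaluated at distance `r`. -/
noncomputable def maternCov (τ η ν r : ℝ) : ℝ :=
  τ ^ 2 / (Real.Gamma ν * 2 ^ (ν - 1)) * (Real.sqrt (2 * ν) * r / η) ^ ν *
    besselK ν (Real.sqrt (2 * ν) * r / η)

/-- As `ν → ∞`, the Matérn covariance converges to the Gaussian covariance
`τ² exp(−‖x − x'‖²/(2η²))`. -/
theorem matern_tendsto_gaussian (d : ℕ) (τ η : ℝ) (hτ : 0 < τ) (hη : 0 < η)
    (x x' : EuclideanSpace ℝ (Fin d)) (hxx : x ≠ x') :
    Filter.Tendsto (fun ν => maternCov τ η ν ‖x - x'‖) Filter.atTop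
      (nhds (τ ^ 2 * Real.exp (-‖x - x'‖ ^ 2 / (2 * η ^ 2)))) := by
  set r : ℝ := ‖x - x'‖ with hr_def
  have hr : 0 < r := by
    rw [hr_def, norm_pos_iff]
    exact sub_ne_zero.mpr hxx
  set b : ℝ := r ^ 2 / (2 * η ^ 2) with hb_def
  have hb : 0 ≤ b := by positivity
  have key : ∀ ν : ℝ, 1 ≤ ν → maternCov τ η ν r =
      τ ^ 2 * ((∫ u in Set.Ioi (0:ℝ), u ^ (ν - 1) * Real.exp (-u - ν * b / u)) /
        Real.Gamma ν) := by
    intro ν hν1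
    have hν0 : (0:ℝ) < ν := by linarith
    have hG : 0 < Real.Gamma ν := Real.Gamma_pos_of_pos hν0
    simp only [maternCov]
    set z : ℝ := Real.sqrt (2 * ν) * r / η with hz_def
    have hsq : (0:ℝ) < Real.sqrt (2 * ν) := Real.sqrt_pos.mpr (by linarith)
    have hz : 0 < z := by rw [hz_def]; positivity
    have hz24 : z ^ 2 / 4 = ν * b := by
      have h2 : z ^ 2 = 2 * ν * r ^ 2 / η ^ 2 := by
        rw [hz_def, div_pow, mul_pow, Real.sq_sqrt (by linarith : (0:ℝ) ≤ 2 * ν)]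
      rw [h2, hb_def]
      field_simp
      ring
    have hint_eq : (∫ u in Set.Ioi (0:ℝ), u ^ (ν - 1) * Real.exp (-u - ν * b / u)) =
        (z / 2) ^ ν * (2 * besselK ν z) := by
      rw [← besselK_identity hν0 hz]
      refine setIntegral_congr_fun measurableSet_Ioi fun u _ => ?_
      have : z ^ 2 / (4 * u) = ν * b / u := by
        rw [← div_div, hz24]
      rw [this]
    rw [hint_eq, Real.div_rpow hz.le (by norm_num : (0:ℝ) ≤ 2),
      Real.rpow_sub_one (two_ne_zero)]
    have h2ν : (0:ℝ) < (2:ℝ) ^ ν := Real.rpow_pos_of_pos (by norm_num) ν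
    field_simp
  have heq : (fun ν : ℝ => τ ^ 2 *
      ((∫ u in Set.Ioi (0:ℝ), u ^ (ν - 1) * Real.exp (-u - ν * b / u)) / Real.Gamma ν))
      =ᶠ[Filter.atTop] (fun ν => maternCov τ η ν r) := by
    filter_upwards [Filter.eventually_ge_atTop 1] with ν hν
    exact (key ν hν).symm
  have hlim := (Filter.Tendsto.const_mul (τ ^ 2) (tendsto_J hb)).congr' heq
  have : -r ^ 2 / (2 * η ^ 2) = -b := by rw [hb_def, neg_div]
  rw [this]
  exact hlim
end
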